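/- Let G be a graph in the family 𝓑 constructed from the base graph by k − 1 applications of the operation O_1 (where k ≥ 1), so that G contains exactly k vertex-disjoint copies of K_{2,3}. Then the set consisting of the root of G together with, for each of the k copies of K_{2,3} in G, the two vertices of the partite set of size 2 of that copy, is an independent dominating set of G of minimum cardinality 2k + 1 = i(G). -/
import Mathlib


namespace PaperIndepDom

open SimpleGraph

/-- The degree of a vertex `v` in a graph `G`. -/
noncomputable def deg {V : Type*} (G : SimpleGraph V) (v : V) : ℕ :=
  (G.neighborSet v).ncard

/-- A set `S` is an independent dominating set of `G`. -/
def IsIDSet {V : Type*} (G : SimpleGraph V) (S : Set V) : Prop :=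
  (∀ u ∈ S, ∀ v ∈ S, ¬ G.Adj u v) ∧ ∀ v, v ∉ S → ∃ u ∈ S, G.Adj u v

/-- The independent domination number `i(G)`. -/
noncomputable def iNum {V : Type*} (G : SimpleGraph V) : ℕ :=
  sInf {n | ∃ S : Set V, IsIDSet G S ∧ S.ncard = n}

/-- The base graph `B₁`: a copy of `K_{2,3}` (vertices `0, 1` forming the partite set of
size 2, vertices `2, 3, 4` forming the partite set of size 3) together with a new root
vertex `5` joined to the degree-2 vertex `2`. -/
def baseGraph : SimpleGraph (Fin 6) :=
  SimpleGraph.fromRel (fun i j =>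
    (i.val ≤ 1 ∧ 2 ≤ j.val ∧ j.val ≤ 4) ∨ (i = 2 ∧ j = 5))

/-- The graph obtained from `G` by adding a vertex-disjoint copy of `K_{2,3}`
(on the vertex set `Fin 2 ⊕ Fin 3`, the `Fin 2` side being the partite set of size 2)
together with an edge joining the vertex `v'` of `G` to the degree-2 vertex `Sum.inr t`
of the added copy of `K_{2,3}` (operation `O₁`). -/
def addK23 {V : Type*} (G : SimpleGraph V) (v' : V) (t : Fin 3) :
    SimpleGraph (V ⊕ (Fin 2 ⊕ Fin 3)) :=
  SimpleGraph.fromRel (fun x y =>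
    (∃ a b, G.Adj a b ∧ x = Sum.inl a ∧ y = Sum.inl b) ∨
    (∃ i j, x = Sum.inr (Sum.inl i) ∧ y = Sum.inr (Sum.inr j)) ∨
    (x = Sum.inl v' ∧ y = Sum.inr (Sum.inr t)))

/-- `FamilyBSet k G S` means that `G ∈ 𝓑` is obtained (up to isomorphism) from the base
graph by `k − 1` applications of the operation `O₁` (so `G` contains exactly `k`
vertex-disjoint copies of `K_{2,3}`), and `S` is the set consisting of the root of `G`
together with, for each of the `k` copies of `K_{2,3}` in `G`, the two vertices of the
partite set of size 2 of that copy. -/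
inductive FamilyBSet : ℕ → ∀ {V : Type}, SimpleGraph V → Set V → Prop
  | base : FamilyBSet 1 baseGraph ({0, 1, 5} : Set (Fin 6))
  | extend {k : ℕ} {V : Type} {G : SimpleGraph V} {S : Set V}
      (hG : FamilyBSet k G S) (v' : V) (hv' : deg G v' ≤ 2) (t : Fin 3) :
      FamilyBSet (k + 1) (addK23 G v' t)
        (Sum.inl '' S ∪ {Sum.inr (Sum.inl 0), Sum.inr (Sum.inl 1)})
  | iso {k : ℕ} {V W : Type} {G : SimpleGraph V} {H : SimpleGraph W} {S : Set V}
      (e : G ≃g H) (hG : FamilyBSet k G S) : FamilyBSet k H (⇑e '' S)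

section AdjLemmas

variable {V : Type} {G : SimpleGraph V} {v' : V} {t : Fin 3}

lemma adj_ll {a b : V} : (addK23 G v' t).Adj (Sum.inl a) (Sum.inl b) ↔ G.Adj a b := by
  simp [addK23, SimpleGraph.fromRel_adj]
  constructor
  · rintro ⟨h, h2⟩
    rcases h2 with h2 | h2
    · exact h2
    · exact G.adj_symm h2
  · intro h; exact ⟨fun he => G.irrefl (he ▸ h), Or.inl h⟩

lemma adj_to_A {x} {i : Fin 2} :
    (addK23 G v' t).Adj x (Sum.inr (Sum.inl i)) ↔ ∃ j, x = Sum.inr (Sum.inr j) := by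
  simp only [addK23, SimpleGraph.fromRel_adj]
  aesop

lemma adj_to_B {x} {j : Fin 3} :
    (addK23 G v' t).Adj x (Sum.inr (Sum.inr j)) ↔
      (∃ i, x = Sum.inr (Sum.inl i)) ∨ (x = Sum.inl v' ∧ j = t) := by
  simp only [addK23, SimpleGraph.fromRel_adj]
  aesop

lemma adj_to_L {x} {v : V} :
    (addK23 G v' t).Adj x (Sum.inl v) ↔
      (∃ a, x = Sum.inl a ∧ G.Adj a v) ∨ (x = Sum.inr (Sum.inr t) ∧ v = v') := by
  constructor
  · intro h
    rw [addK23, SimpleGraph.fromRel_adj] at h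
    obtain ⟨hne, h⟩ := h
    rcases h with (⟨a,b,hab,hx,hv⟩ | ⟨i,j,hx,hv⟩ | ⟨h1,h2⟩) |
      (⟨a,b,hab,hv,hx⟩ | ⟨i,j,hv,hx⟩ | ⟨h1,h2⟩)
    · exact Or.inl ⟨a, hx, by cases Sum.inl.inj hv; exact hab⟩
    · exact absurd hv (by simp)
    · exact absurd h2 (by simp)
    · exact Or.inl ⟨b, hx, G.adj_symm (by cases Sum.inl.inj hv; exact hab)⟩
    · exact absurd hv (by simp)
    · exact Or.inr ⟨h2, Sum.inl.inj h1⟩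
  · rintro (⟨a, rfl, hab⟩ | ⟨rfl, rfl⟩)
    · rw [addK23, SimpleGraph.fromRel_adj]
      exact ⟨fun h => G.irrefl ((Sum.inl.inj h) ▸ hab), Or.inl (Or.inl ⟨a, v, hab, rfl, rfl⟩)⟩
    · rw [addK23, SimpleGraph.fromRel_adj]
      exact ⟨by simp, Or.inr (Or.inr (Or.inr ⟨rfl, rfl⟩))⟩

end AdjLemmas

section BaseLemmas

instance : DecidableRel baseGraph.Adj := fun a b =>
  decidable_of_iff _ (SimpleGraph.fromRel_adj _ a b).symm

lemma base_id : IsIDSet baseGraph ({0, 1, 5} : Set (Fin 6)) := by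
  constructor
  · intro u hu v hv
    simp only [Set.mem_insert_iff, Set.mem_singleton_iff] at hu hv
    revert hu hv; revert u v; decide
  · intro v hv
    simp only [Set.mem_insert_iff, Set.mem_singleton_iff] at hv ⊢
    revert hv; revert v; decide

lemma base_lb (T : Set (Fin 6)) (hT : IsIDSet baseGraph T) : 3 ≤ T.ncard := by
  classical
  rw [Set.ncard_eq_toFinset_card' T]
  have key : ∀ F : Finset (Fin 6),
      ((∀ u ∈ F, ∀ v ∈ F, ¬ baseGraph.Adj u v) ∧ ∀ v, v ∉ F → ∃ u ∈ F, baseGraph.Adj u v) →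
      3 ≤ F.card := by decide
  apply key
  obtain ⟨h1, h2⟩ := hT
  refine ⟨fun u hu v hv => h1 u (by simpa using hu) v (by simpa using hv), fun v hv => ?_⟩
  obtain ⟨u, hu, hadj⟩ := h2 v (by simpa using hv)
  exact ⟨u, by simpa using hu, hadj⟩

end BaseLemmas

section Card

lemma ncard_two_more {α β : Type} [Finite α] [Finite β] {TV : Set α} {T : Set (α ⊕ β)}
    (hsub : Sum.inl '' TV ⊆ T) {x y : α ⊕ β} (hx : x ∈ T) (hy : y ∈ T)
    (hxy : x ≠ y) (hx' : ∀ a, x ≠ Sum.inl a) (hy' : ∀ a, y ≠ Sum.inl a) :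
    TV.ncard + 2 ≤ T.ncard := by
  have h1 : insert x (insert y (Sum.inl '' TV)) ⊆ T := by
    intro z hz
    rcases hz with rfl | rfl | hz
    · exact hx
    · exact hy
    · exact hsub hz
  have hyn : y ∉ Sum.inl '' TV := by rintro ⟨a, _, rfl⟩; exact hy' a rfl
  have hxn : x ∉ insert y (Sum.inl '' TV) := by
    rintro (rfl | ⟨a, _, rfl⟩)
    · exact hxy rfl
    · exact hx' a rfl
  have h2 : (insert x (insert y (Sum.inl '' TV))).ncard = TV.ncard + 2 := by
    rw [Set.ncard_insert_of_notMem hxn, Set.ncard_insert_of_notMem hyn,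
      Set.ncard_image_of_injective _ Sum.inl_injective]
  rw [← h2]
  exact Set.ncard_le_ncard h1 (Set.toFinite T)

lemma ncard_three_more {α β : Type} [Finite α] [Finite β] {TV : Set α} {T : Set (α ⊕ β)}
    (hsub : Sum.inl '' TV ⊆ T) {x y z : α ⊕ β} (hx : x ∈ T) (hy : y ∈ T) (hz : z ∈ T)
    (hxy : x ≠ y) (hxz : x ≠ z) (hyz : y ≠ z)
    (hx' : ∀ a, x ≠ Sum.inl a) (hy' : ∀ a, y ≠ Sum.inl a) (hz' : ∀ a, z ≠ Sum.inl a) :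
    TV.ncard + 3 ≤ T.ncard := by
  have h1 : insert x (insert y (insert z (Sum.inl '' TV))) ⊆ T := by
    intro w hw
    rcases hw with rfl | rfl | rfl | hw
    · exact hx
    · exact hy
    · exact hz
    · exact hsub hw
  have hzn : z ∉ Sum.inl '' TV := by rintro ⟨a, _, rfl⟩; exact hz' a rfl
  have hyn : y ∉ insert z (Sum.inl '' TV) := by
    rintro (rfl | ⟨a, _, rfl⟩)
    · exact hyz rfl
    · exact hy' a rfl
  have hxn : x ∉ insert y (insert z (Sum.inl '' TV)) := by
    rintro (rfl | rfl | ⟨a, _, rfl⟩)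
    · exact hxy rfl
    · exact hxz rfl
    · exact hx' a rfl
  have h2 : (insert x (insert y (insert z (Sum.inl '' TV)))).ncard = TV.ncard + 3 := by
    rw [Set.ncard_insert_of_notMem hxn, Set.ncard_insert_of_notMem hyn,
      Set.ncard_insert_of_notMem hzn, Set.ncard_image_of_injective _ Sum.inl_injective]
  rw [← h2]
  exact Set.ncard_le_ncard h1 (Set.toFinite T)

end Card

lemma main_lemma : ∀ {k : ℕ} {V : Type} {G : SimpleGraph V} {S : Set V},
    FamilyBSet k G S →
    Finite V ∧ IsIDSet G S ∧ S.ncard = 2 * k + 1 ∧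
      ∀ T : Set V, IsIDSet G T → 2 * k + 1 ≤ T.ncard := by
  intro k V G S h
  induction h with
  | base =>
    refine ⟨inferInstance, base_id, ?_, fun T hT => base_lb T hT⟩
    rw [Set.ncard_insert_of_notMem (by simp), Set.ncard_insert_of_notMem (by simp),
      Set.ncard_singleton]
  | @extend k V G S hG v' hv' t ih =>
    obtain ⟨hfin, ⟨hid1, hid2⟩, hcard, hlb⟩ := ih
    haveI := hfin
    have hAnotL : ∀ (i : Fin 2) (a : V), Sum.inr (Sum.inl i) ≠ (Sum.inl a : V ⊕ (Fin 2 ⊕ Fin 3)) := by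
      intro i a h; exact absurd h (by simp)
    have hBnotL : ∀ (j : Fin 3) (a : V), Sum.inr (Sum.inr j) ≠ (Sum.inl a : V ⊕ (Fin 2 ⊕ Fin 3)) := by
      intro j a h; exact absurd h (by simp)
    refine ⟨inferInstance, ⟨?_, ?_⟩, ?_, ?_⟩
    · -- independence of S'
      intro u hu v hv hadj
      rcases hu with ⟨a, ha, rfl⟩ | hu
      · rcases hv with ⟨b, hb, rfl⟩ | hv
        · exact hid1 a ha b hb (adj_ll.mp hadj)
        · rcases hv with rfl | rfl <;>
          · rw [adj_to_A] at hadj; obtain ⟨j, hj⟩ := hadj; simp at hj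
      · rcases hv with ⟨b, hb, rfl⟩ | hv
        · rcases hu with rfl | rfl <;>
          · rw [adj_to_L] at hadj
            rcases hadj with ⟨a, ha, _⟩ | ⟨ha, _⟩ <;> simp at ha
        · rcases hu with rfl | rfl <;> rcases hv with rfl | rfl <;>
          · rw [adj_to_A] at hadj; obtain ⟨j, hj⟩ := hadj; simp at hj
    · -- domination of S'
      intro v hv
      rcases v with w | iv
      · have hw : w ∉ S := fun h => hv (Or.inl ⟨w, h, rfl⟩)
        obtain ⟨u, hu, hadj⟩ := hid2 w hw
        exact ⟨Sum.inl u, Or.inl ⟨u, hu, rfl⟩, adj_ll.mpr hadj⟩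
      · rcases iv with i | j
        · exfalso
          have : i = 0 ∨ i = 1 := by omega
          rcases this with rfl | rfl
          · exact hv (Or.inr (Or.inl rfl))
          · exact hv (Or.inr (Or.inr rfl))
        · exact ⟨Sum.inr (Sum.inl 0), Or.inr (Or.inl rfl),
            ((adj_to_B (x := Sum.inr (Sum.inl 0))).mpr (Or.inl ⟨0, rfl⟩))⟩
    · -- cardinality
      rw [Set.union_comm]
      have : ({Sum.inr (Sum.inl 0), Sum.inr (Sum.inl 1)} :
          Set (V ⊕ (Fin 2 ⊕ Fin 3))) ∪ Sum.inl '' S =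
          insert (Sum.inr (Sum.inl 0)) (insert (Sum.inr (Sum.inl 1)) (Sum.inl '' S)) := by
        rw [Set.insert_union, Set.singleton_union]
      rw [this, Set.ncard_insert_of_notMem, Set.ncard_insert_of_notMem,
        Set.ncard_image_of_injective _ Sum.inl_injective, hcard]
      · ring
      · rintro ⟨a, _, ha⟩; simp at ha
      · rintro (h | ⟨a, _, ha⟩)
        · simp at h
        · exact absurd ha (by simp)
    · -- lower bound
      intro T hT
      set TV : Set V := Sum.inl ⁻¹' T with hTV
      have hsub : Sum.inl '' TV ⊆ T := by rintro _ ⟨a, ha, rfl⟩; exact ha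
      have hindepTV : ∀ u ∈ TV, ∀ v ∈ TV, ¬ G.Adj u v := by
        intro u hu v hv hadj
        exact hT.1 _ hu _ hv (adj_ll.mpr hadj)
      by_cases hA : Sum.inr (Sum.inl 0) ∈ T ∨ Sum.inr (Sum.inl 1) ∈ T
      · -- both vertices of the 2-side are in T
        have hBnot : ∀ j : Fin 3, Sum.inr (Sum.inr j) ∉ T := by
          intro j hj
          rcases hA with h | h
          · exact hT.1 _ hj _ h (adj_to_A.mpr ⟨j, rfl⟩)
          · exact hT.1 _ hj _ h (adj_to_A.mpr ⟨j, rfl⟩)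
        have hidTV : IsIDSet G TV := by
          refine ⟨hindepTV, fun v hv => ?_⟩
          obtain ⟨u, hu, hadj⟩ := hT.2 _ hv
          rw [adj_to_L] at hadj
          rcases hadj with ⟨a, rfl, hadjG⟩ | ⟨rfl, rfl⟩
          · exact ⟨a, hu, hadjG⟩
          · exact absurd hu (hBnot t)
        have hAin : ∀ i : Fin 2, Sum.inr (Sum.inl i) ∈ T := by
          intro i
          by_contra hcon
          obtain ⟨u, hu, hadj⟩ := hT.2 _ hcon
          rw [adj_to_A] at hadj
          obtain ⟨j, rfl⟩ := hadj
          exact hBnot j hu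
        have hb := ncard_two_more hsub (hAin 0) (hAin 1) (by simp) (hAnotL 0) (hAnotL 1)
        have := hlb TV hidTV
        omega
      · push_neg at hA
        have hAnot : ∀ i : Fin 2, Sum.inr (Sum.inl i) ∉ T := by
          intro i
          have : i = 0 ∨ i = 1 := by omega
          rcases this with rfl | rfl
          · exact hA.1
          · exact hA.2
        by_cases hBt : Sum.inr (Sum.inr t) ∈ T
        · -- B t ∈ T: then all three B's in T
          have hBall : ∀ j : Fin 3, Sum.inr (Sum.inr j) ∈ T := by
            intro j
            by_contra hcon
            obtain ⟨u, hu, hadj⟩ := hT.2 _ hcon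
            rw [adj_to_B] at hadj
            rcases hadj with ⟨i, rfl⟩ | ⟨rfl, rfl⟩
            · exact hAnot i hu
            · exact hcon hBt
          have hv'not : Sum.inl v' ∉ T := fun hmem =>
            hT.1 _ hmem _ hBt (adj_to_B.mpr (Or.inr ⟨rfl, rfl⟩))
          by_cases hnb : ∃ u ∈ TV, G.Adj u v'
          · have hidTV : IsIDSet G TV := by
              refine ⟨hindepTV, fun v hv => ?_⟩
              obtain ⟨u, hu, hadj⟩ := hT.2 _ hv
              rw [adj_to_L] at hadj
              rcases hadj with ⟨a, rfl, hadjG⟩ | ⟨rfl, rfl⟩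
              · exact ⟨a, hu, hadjG⟩
              · obtain ⟨u, hu, hadjG⟩ := hnb
                exact ⟨u, hu, hadjG⟩
            have hb := ncard_two_more hsub (hBall 0) (hBall 1) (by simp) (hBnotL 0) (hBnotL 1)
            have := hlb TV hidTV
            omega
          · push_neg at hnb
            have hv'TV : v' ∉ TV := hv'not
            have hidT' : IsIDSet G (insert v' TV) := by
              constructor
              · intro u hu v hv hadj
                rcases hu with rfl | hu
                · rcases hv with rfl | hv
                  · exact G.irrefl hadj
                  · exact hnb v hv (G.adj_symm hadj)
                · rcases hv with rfl | hv
                  · exact hnb u hu hadj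
                  · exact hindepTV u hu v hv hadj
              · intro v hv
                have hv1 : v ≠ v' := fun h => hv (h ▸ Set.mem_insert v' TV)
                have hv2 : v ∉ TV := fun h => hv (Set.mem_insert_of_mem _ h)
                obtain ⟨u, hu, hadj⟩ := hT.2 _ hv2
                rw [adj_to_L] at hadj
                rcases hadj with ⟨a, rfl, hadjG⟩ | ⟨rfl, rfl⟩
                · exact ⟨a, Set.mem_insert_of_mem _ hu, hadjG⟩
                · exact absurd rfl hv1
            have hc : (insert v' TV).ncard = TV.ncard + 1 :=
              Set.ncard_insert_of_notMem hv'TV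
            have hb := ncard_three_more hsub (hBall 0) (hBall 1) (hBall 2)
              (by simp) (by simp) (by simp) (hBnotL 0) (hBnotL 1) (hBnotL 2)
            have := hlb _ hidT'
            omega
        · -- B t ∉ T: v' ∈ T and the other two B's in T
          have hv'T : Sum.inl v' ∈ T := by
            obtain ⟨u, hu, hadj⟩ := hT.2 _ hBt
            rw [adj_to_B] at hadj
            rcases hadj with ⟨i, rfl⟩ | ⟨rfl, _⟩
            · exact absurd hu (hAnot i)
            · exact hu
          have hBo : ∀ j : Fin 3, j ≠ t → Sum.inr (Sum.inr j) ∈ T := by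
            intro j hj
            by_contra hcon
            obtain ⟨u, hu, hadj⟩ := hT.2 _ hcon
            rw [adj_to_B] at hadj
            rcases hadj with ⟨i, rfl⟩ | ⟨rfl, rfl⟩
            · exact hAnot i hu
            · exact hj rfl
          have hidTV : IsIDSet G TV := by
            refine ⟨hindepTV, fun v hv => ?_⟩
            obtain ⟨u, hu, hadj⟩ := hT.2 _ hv
            rw [adj_to_L] at hadj
            rcases hadj with ⟨a, rfl, hadjG⟩ | ⟨rfl, rfl⟩
            · exact ⟨a, hu, hadjG⟩
            · exact absurd hu hBt
          have h3 : ∀ t : Fin 3, ∃ j1 j2 : Fin 3, j1 ≠ t ∧ j2 ≠ t ∧ j1 ≠ j2 := by decide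
          obtain ⟨j1, j2, hj1, hj2, hj12⟩ := h3 t
          have hb := ncard_two_more hsub (hBo j1 hj1) (hBo j2 hj2)
            (by simp [hj12]) (hBnotL j1) (hBnotL j2)
          have := hlb TV hidTV
          omega
  | @iso k V W G H S e hG ih =>
    obtain ⟨hfin, ⟨hid1, hid2⟩, hcard, hlb⟩ := ih
    haveI := hfin
    haveI : Finite W := Finite.of_equiv V e.toEquiv
    refine ⟨inferInstance, ⟨?_, ?_⟩, ?_, ?_⟩
    · rintro _ ⟨a, ha, rfl⟩ _ ⟨b, hb, rfl⟩ hadj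
      exact hid1 a ha b hb (e.map_adj_iff.mp hadj)
    · intro w hw
      have hv : e.symm w ∉ S := fun h => hw ⟨e.symm w, h, e.apply_symm_apply w⟩
      obtain ⟨u, hu, hadj⟩ := hid2 _ hv
      refine ⟨e u, ⟨u, hu, rfl⟩, ?_⟩
      have := e.map_adj_iff.mpr hadj
      rwa [e.apply_symm_apply] at this
    · rw [Set.ncard_image_of_injective _ e.injective, hcard]
    · intro T hT
      have hidT' : IsIDSet G (⇑e.symm '' T) := by
        constructor
        · rintro _ ⟨x, hx, rfl⟩ _ ⟨y, hy, rfl⟩ hadj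
          have := e.map_adj_iff.mpr hadj
          rw [e.apply_symm_apply, e.apply_symm_apply] at this
          exact hT.1 x hx y hy this
        · intro v hv
          have hev : e v ∉ T := fun h => hv ⟨e v, h, e.symm_apply_apply v⟩
          obtain ⟨u, hu, hadj⟩ := hT.2 _ hev
          refine ⟨e.symm u, ⟨u, hu, rfl⟩, ?_⟩
          have : H.Adj (e (e.symm u)) (e v) := by rwa [e.apply_symm_apply]
          exact e.map_adj_iff.mp this
      have := hlb _ hidT'
      rwa [Set.ncard_image_of_injective _ e.symm.injective] at this


/-- If `G ∈ 𝓑` is constructed from the base graph by `k − 1`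
applications of `O₁` (`k ≥ 1`) and `S` is the set consisting of the root of `G` together
with, for each of the `k` copies of `K_{2,3}` in `G`, the two vertices of the partite set
of size 2 of that copy, then `S` is an independent dominating set of `G` of minimum
cardinality `2k + 1 = i(G)`. -/
theorem statement10 {V : Type} (G : SimpleGraph V) (k : ℕ) (hk : 1 ≤ k)
    (S : Set V) (hS : FamilyBSet k G S) :
    IsIDSet G S ∧ S.ncard = 2 * k + 1 ∧ iNum G = 2 * k + 1 := by
  obtain ⟨hfin, hid, hcard, hlb⟩ := main_lemma hS
  refine ⟨hid, hcard, ?_⟩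
  have hne : {n | ∃ S' : Set V, IsIDSet G S' ∧ S'.ncard = n}.Nonempty :=
    ⟨2 * k + 1, S, hid, hcard⟩
  obtain ⟨T, hT, hTc⟩ := Nat.sInf_mem hne
  refine le_antisymm (Nat.sInf_le ⟨S, hid, hcard⟩) ?_
  rw [iNum, ← hTc]
  exact hlb T hT


end PaperIndepDom
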